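/- Let A be the n×n upper-shift nilpotent matrix, c = e₁ᵀ, γ > 0, and Q(γ) a positive definite solution of AQ + QAᵀ - Q cᵀ c Q = -γQ. Then c Q(γ) cᵀ = nγ. -/
import Mathlib


open Matrix

/-- for any positive definite solution `Q` of the dual parametric
Lyapunov equation `AQ + QAᵀ - QcᵀcQ = -γQ` (with `c = e₁ᵀ`), `c Q cᵀ = nγ`. -/
theorem stmt_10 (n : ℕ) (hn : 0 < n) (γ : ℝ) (hγ : 0 < γ)
    (A : Matrix (Fin n) (Fin n) ℝ)
    (hA : A = Matrix.of fun i j : Fin n => if (i : ℕ) + 1 = (j : ℕ) then (1:ℝ) else 0)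
    (c : Fin n → ℝ) (hc : ∀ i, c i = if (i : ℕ) = 0 then (1:ℝ) else 0)
    (Q : Matrix (Fin n) (Fin n) ℝ) (hQ : Q.PosDef)
    (hPLE : A * Q + Q * Aᵀ - Q * Matrix.vecMulVec c c * Q = -(γ • Q)) :
    c ⬝ᵥ (Q *ᵥ c) = n * γ := by
  have hdet : Q.det ≠ 0 := hQ.det_pos.ne'
  have hQQ : Q * Q⁻¹ = 1 := Matrix.mul_nonsing_inv Q (isUnit_iff_ne_zero.mpr hdet)
  have hQiQ : Q⁻¹ * Q = 1 := Matrix.nonsing_inv_mul Q (isUnit_iff_ne_zero.mpr hdet)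
  have hAtr : A.trace = 0 := by
    simp [hA, Matrix.trace, Matrix.diag]
  have h := congrArg (fun M => (M * Q⁻¹).trace) hPLE
  simp only [sub_mul, add_mul, Matrix.mul_assoc, hQQ, Matrix.mul_one,
    Matrix.neg_mul, Matrix.smul_mul, Matrix.trace_sub, Matrix.trace_add,
    Matrix.trace_neg, Matrix.trace_smul] at h
  rw [Matrix.trace_mul_comm Q (Aᵀ * Q⁻¹)] at h
  rw [Matrix.mul_assoc, hQiQ, Matrix.mul_one, Matrix.trace_transpose,
    hAtr, Matrix.trace_mul_comm Q (Matrix.vecMulVec c c)] at h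
  have htr : (Matrix.vecMulVec c c * Q).trace = c ⬝ᵥ Q *ᵥ c := by
    simp [Matrix.trace, Matrix.diag, Matrix.mul_apply, Matrix.vecMulVec_apply,
      dotProduct, Matrix.mulVec, mul_comm, mul_left_comm, Finset.mul_sum]
    refine Finset.sum_congr rfl fun x _ => Finset.sum_congr rfl fun y _ => ?_
    rw [show Q y x = Q x y from (Matrix.IsHermitian.apply hQ.1 y x).symm]
  rw [htr] at h
  have htrQ : (trace (1 : Matrix (Fin n) (Fin n) ℝ)) = (n : ℝ) := by simp
  rw [htrQ, smul_eq_mul] at h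
  linarith
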